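/- Let A ∈ ℂ^{K̄×N}, B ∈ ℂ^{K̄×K}, P^max > 0, and for each l in a finite index set L let A_l ∈ ℂ^{K_l×N}. Define ρ(V) = ‖AV − B‖_F², f(V) = Σ_{l∈L} ‖A_l V‖_F², and S = {V : ‖V‖_F² ≤ P^max}. Suppose δ ∈ ℝ, ν ≥ 0, μ ≥ 0, and V° ∈ ℂ^{N×K} satisfy the KKT conditions: ρ(V°) ≤ δ, ‖V°‖_F² ≤ P^max, ν·(ρ(V°) − δ) = 0, μ·(‖V°‖_F² − P^max) = 0, and V° minimizes V ↦ f(V) + ν·ρ(V) + μ·‖V‖_F² over all of ℂ^{N×K}. Then, with θ = ν/(1+ν) ∈ [0,1), V° minimizes the weighted objective (1−θ)f(V) + θρ(V) over S. (One direction of the paper's Lemma 3: any optimal solution of the constrained leakage problem P^lk_c(δ_c) with dual optimal multiplier ν_c°(δ_c) is an optimal solution of the weighted problem P^w_c(θ_c) with θ_c = ν_c°(δ_c)/(1+ν_c°(δ_c)).) -/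

import Mathlib

open Matrix BigOperators

/-- Squared Frobenius norm of a complex matrix. -/
noncomputable def frobSq {m n : Type*} [Fintype m] [Fintype n] (A : Matrix m n ℂ) : ℝ :=
  ∑ i, ∑ j, ‖A i j‖ ^ 2

/-- One direction of the paper's Lemma 3: if `(V°, ν, μ)` satisfies the KKT
conditions of the constrained leakage problem `P^lk(δ)`, then with
`θ = ν/(1+ν) ∈ [0,1)`, `V°` minimizes the weighted objective
`(1−θ)f + θρ` over the power constraint set `S`. -/
theorem stmt9 (Kb N K : ℕ) (A : Matrix (Fin Kb) (Fin N) ℂ) (B : Matrix (Fin Kb) (Fin K) ℂ)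
    (Pmax : ℝ) (hPmax : 0 < Pmax)
    (L : Type*) [Fintype L] (Kl : L → ℕ) (Al : ∀ l : L, Matrix (Fin (Kl l)) (Fin N) ℂ)
    (δ ν μ : ℝ) (hν : 0 ≤ ν) (hμ : 0 ≤ μ)
    (V₀ : Matrix (Fin N) (Fin K) ℂ)
    (hρ : frobSq (A * V₀ - B) ≤ δ)
    (hS : frobSq V₀ ≤ Pmax)
    (hcs1 : ν * (frobSq (A * V₀ - B) - δ) = 0)
    (hcs2 : μ * (frobSq V₀ - Pmax) = 0)
    (hLag : ∀ V : Matrix (Fin N) (Fin K) ℂ,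
      (∑ l, frobSq (Al l * V₀)) + ν * frobSq (A * V₀ - B) + μ * frobSq V₀ ≤
        (∑ l, frobSq (Al l * V)) + ν * frobSq (A * V - B) + μ * frobSq V) :
    (0 : ℝ) ≤ ν / (1 + ν) ∧ ν / (1 + ν) < 1 ∧
    ∀ V : Matrix (Fin N) (Fin K) ℂ, frobSq V ≤ Pmax →
      (1 - ν / (1 + ν)) * (∑ l, frobSq (Al l * V₀))
          + (ν / (1 + ν)) * frobSq (A * V₀ - B) ≤
        (1 - ν / (1 + ν)) * (∑ l, frobSq (Al l * V))
          + (ν / (1 + ν)) * frobSq (A * V - B) := by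
  have h1ν : (0:ℝ) < 1 + ν := by linarith
  refine ⟨div_nonneg hν (le_of_lt h1ν), by rw [div_lt_one h1ν]; linarith, ?_⟩
  intro V hV
  have key : (∑ l, frobSq (Al l * V₀)) + ν * frobSq (A * V₀ - B) ≤
      (∑ l, frobSq (Al l * V)) + ν * frobSq (A * V - B) := by
    have h := hLag V
    have hμV : μ * frobSq V ≤ μ * frobSq V₀ := by
      rcases eq_or_lt_of_le hμ with h0 | h0
      · simp [← h0]
      · have : frobSq V₀ = Pmax := by
          have := mul_eq_zero.mp hcs2
          rcases this with h' | h'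
          · exact absurd h' (ne_of_gt h0)
          · linarith
        rw [this]
        exact mul_le_mul_of_nonneg_left hV hμ
    linarith
  have h1 : 1 - ν / (1 + ν) = 1 / (1 + ν) := by field_simp; ring
  rw [h1]
  have h2 : ν / (1 + ν) = (1 / (1 + ν)) * ν := by ring
  rw [h2]
  have hpos : (0:ℝ) ≤ 1 / (1 + ν) := by positivity
  calc 1 / (1 + ν) * (∑ l, frobSq (Al l * V₀)) + 1 / (1 + ν) * ν * frobSq (A * V₀ - B)
      = (1 / (1 + ν)) * ((∑ l, frobSq (Al l * V₀)) + ν * frobSq (A * V₀ - B)) := by ring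
    _ ≤ (1 / (1 + ν)) * ((∑ l, frobSq (Al l * V)) + ν * frobSq (A * V - B)) :=
        mul_le_mul_of_nonneg_left key hpos
    _ = 1 / (1 + ν) * (∑ l, frobSq (Al l * V)) + 1 / (1 + ν) * ν * frobSq (A * V - B) := by ring
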